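/- Define the Carreau stress S(D) := 2ν(ε² + |D|²)^{(r−2)/2} D on symmetric matrices, with ν > 0, ε > 0, r ∈ (1,2]. Then S is monotone: (S(D₁) − S(D₂)):(D₁ − D₂) ≥ 0 for all symmetric D₁, D₂. -/
import Mathlib


/-- The Frobenius pairing `A : B = Σ_{ij} A_{ij} B_{ij}`. -/
def frob2 {d : ℕ} (A B : Fin d → Fin d → ℝ) : ℝ := ∑ i, ∑ j, A i j * B i j

/-- The Frobenius norm `|A| = (A:A)^{1/2}`. -/
noncomputable def fnorm {d : ℕ} (A : Fin d → Fin d → ℝ) : ℝ := Real.sqrt (frob2 A A)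

/-- The Carreau stress `S(D) = 2ν (ε² + |D|²)^{(r−2)/2} D`. -/
noncomputable def carreau {d : ℕ} (ν ε r : ℝ) (D : Fin d → Fin d → ℝ) :
    Fin d → Fin d → ℝ :=
  (2 * ν * (ε ^ 2 + fnorm D ^ 2) ^ ((r - 2) / 2)) • D

lemma frob2_prod {d : ℕ} (A B : Fin d → Fin d → ℝ) :
    frob2 A B = ∑ p : Fin d × Fin d, A p.1 p.2 * B p.1 p.2 := by
  rw [frob2, Fintype.sum_prod_type]

lemma frob2_self_nonneg {d : ℕ} (A : Fin d → Fin d → ℝ) : 0 ≤ frob2 A A := by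
  rw [frob2_prod]
  exact Finset.sum_nonneg fun p _ => mul_self_nonneg _

lemma fnorm_nonneg {d : ℕ} (A : Fin d → Fin d → ℝ) : 0 ≤ fnorm A := Real.sqrt_nonneg _

lemma fnorm_sq {d : ℕ} (A : Fin d → Fin d → ℝ) : fnorm A ^ 2 = frob2 A A :=
  Real.sq_sqrt (frob2_self_nonneg A)

/-- Cauchy–Schwarz for the Frobenius pairing. -/
lemma frob2_le {d : ℕ} (A B : Fin d → Fin d → ℝ) : frob2 A B ≤ fnorm A * fnorm B := by
  have h := Finset.sum_mul_sq_le_sq_mul_sq Finset.univ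
    (fun p : Fin d × Fin d => A p.1 p.2) (fun p : Fin d × Fin d => B p.1 p.2)
  have hA : ∑ p : Fin d × Fin d, A p.1 p.2 ^ 2 = fnorm A ^ 2 := by
    rw [fnorm_sq, frob2_prod]; exact Finset.sum_congr rfl fun p _ => sq (A p.1 p.2) ▸ by ring
  have hB : ∑ p : Fin d × Fin d, B p.1 p.2 ^ 2 = fnorm B ^ 2 := by
    rw [fnorm_sq, frob2_prod]; exact Finset.sum_congr rfl fun p _ => by ring
  rw [hA, hB, ← frob2_prod] at h
  nlinarith [fnorm_nonneg A, fnorm_nonneg B, mul_nonneg (fnorm_nonneg A) (fnorm_nonneg B)]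

/-- Monotonicity of `t ↦ t (ε² + t²)^{(r-2)/2}` on `[0, ∞)`. -/
lemma carreau_scalar_mono (ε r : ℝ) (hε : 0 < ε) (hr1 : 1 < r) (hr2 : r ≤ 2)
    {s t : ℝ} (hs : 0 ≤ s) (hst : s ≤ t) :
    s * (ε ^ 2 + s ^ 2) ^ ((r - 2) / 2) ≤ t * (ε ^ 2 + t ^ 2) ^ ((r - 2) / 2) := by
  have ht : 0 ≤ t := hs.trans hst
  have hA : (0:ℝ) < ε ^ 2 + s ^ 2 := by positivity
  have hB : (0:ℝ) < ε ^ 2 + t ^ 2 := by positivity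
  have hL : 0 ≤ s * (ε ^ 2 + s ^ 2) ^ ((r - 2) / 2) :=
    mul_nonneg hs (Real.rpow_nonneg hA.le _)
  have hR : 0 ≤ t * (ε ^ 2 + t ^ 2) ^ ((r - 2) / 2) :=
    mul_nonneg ht (Real.rpow_nonneg hB.le _)
  have sqkey : ∀ x : ℝ, 0 < x → (x ^ ((r - 2) / 2)) ^ 2 = x ^ (r - 2) := by
    intro x hx
    rw [← Real.rpow_natCast (x ^ ((r - 2) / 2)) 2, ← Real.rpow_mul hx.le]
    norm_num
  -- compare squares
  have key : s ^ 2 * (ε ^ 2 + s ^ 2) ^ (r - 2) ≤ t ^ 2 * (ε ^ 2 + t ^ 2) ^ (r - 2) := by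
    have h1 : (ε ^ 2 + s ^ 2) ^ (r - 2) = (ε ^ 2 + s ^ 2) ^ (r - 1) / (ε ^ 2 + s ^ 2) := by
      rw [show r - 2 = (r - 1) - 1 by ring, Real.rpow_sub_one hA.ne']
    have h2 : (ε ^ 2 + t ^ 2) ^ (r - 2) = (ε ^ 2 + t ^ 2) ^ (r - 1) / (ε ^ 2 + t ^ 2) := by
      rw [show r - 2 = (r - 1) - 1 by ring, Real.rpow_sub_one hB.ne']
    rw [h1, h2]
    have hdiv : s ^ 2 / (ε ^ 2 + s ^ 2) ≤ t ^ 2 / (ε ^ 2 + t ^ 2) := by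
      rw [div_le_div_iff₀ hA hB]
      have hst2 : s ^ 2 ≤ t ^ 2 := pow_le_pow_left₀ hs hst 2
      nlinarith [sq_nonneg ε]
    have hpow : (ε ^ 2 + s ^ 2) ^ (r - 1) ≤ (ε ^ 2 + t ^ 2) ^ (r - 1) :=
      Real.rpow_le_rpow hA.le (by nlinarith [pow_le_pow_left₀ hs hst 2]) (by linarith)
    calc s ^ 2 * ((ε ^ 2 + s ^ 2) ^ (r - 1) / (ε ^ 2 + s ^ 2))
        = (s ^ 2 / (ε ^ 2 + s ^ 2)) * (ε ^ 2 + s ^ 2) ^ (r - 1) := by ring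
      _ ≤ (t ^ 2 / (ε ^ 2 + t ^ 2)) * (ε ^ 2 + t ^ 2) ^ (r - 1) := by
          apply mul_le_mul hdiv hpow (Real.rpow_nonneg hA.le _)
          positivity
      _ = t ^ 2 * ((ε ^ 2 + t ^ 2) ^ (r - 1) / (ε ^ 2 + t ^ 2)) := by ring
  have hsq : (s * (ε ^ 2 + s ^ 2) ^ ((r - 2) / 2)) ^ 2
      ≤ (t * (ε ^ 2 + t ^ 2) ^ ((r - 2) / 2)) ^ 2 := by
    rw [mul_pow, mul_pow, sqkey _ hA, sqkey _ hB]
    exact key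
  exact (pow_le_pow_iff_left₀ hL hR two_ne_zero).mp hsq

/-- The Carreau constitutive law with `ν > 0`, `ε > 0`, `r ∈ (1,2]` is monotone:
`(S(D₁) − S(D₂)) : (D₁ − D₂) ≥ 0` for all symmetric `D₁, D₂`. -/
theorem stmt_10 {d : ℕ} (ν ε r : ℝ) (hν : 0 < ν) (hε : 0 < ε)
    (hr1 : 1 < r) (hr2 : r ≤ 2)
    (D₁ D₂ : Fin d → Fin d → ℝ)
    (hsym₁ : ∀ i j, D₁ i j = D₁ j i) (hsym₂ : ∀ i j, D₂ i j = D₂ j i) :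
    0 ≤ frob2 (carreau ν ε r D₁ - carreau ν ε r D₂) (D₁ - D₂) := by
  set x := fnorm D₁ with hxdef
  set y := fnorm D₂ with hydef
  set a := 2 * ν * (ε ^ 2 + x ^ 2) ^ ((r - 2) / 2) with hadef
  set b := 2 * ν * (ε ^ 2 + y ^ 2) ^ ((r - 2) / 2) with hbdef
  have hx : 0 ≤ x := fnorm_nonneg _
  have hy : 0 ≤ y := fnorm_nonneg _
  have ha : 0 < a := by
    apply mul_pos (by linarith)
    exact Real.rpow_pos_of_pos (by positivity) _
  have hb : 0 < b := by
    apply mul_pos (by linarith)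
    exact Real.rpow_pos_of_pos (by positivity) _
  have expand : frob2 (carreau ν ε r D₁ - carreau ν ε r D₂) (D₁ - D₂)
      = a * frob2 D₁ D₁ - (a + b) * frob2 D₁ D₂ + b * frob2 D₂ D₂ := by
    simp only [frob2_prod, carreau, ← hxdef, ← hydef, ← hadef, ← hbdef, Pi.sub_apply,
      Pi.smul_apply, smul_eq_mul, Finset.mul_sum, ← Finset.sum_sub_distrib,
      ← Finset.sum_add_distrib]
    exact Finset.sum_congr rfl fun p _ => by ring
  have hX : frob2 D₁ D₁ = x ^ 2 := (fnorm_sq D₁).symm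
  have hY : frob2 D₂ D₂ = y ^ 2 := (fnorm_sq D₂).symm
  have hP : frob2 D₁ D₂ ≤ x * y := frob2_le D₁ D₂
  -- the scalar monotonicity gives sign compatibility of (x - y) and (a x - b y)
  have hmono : 0 ≤ (x - y) * (a * x - b * y) := by
    rcases le_total x y with h | h
    · have := carreau_scalar_mono ε r hε hr1 hr2 hx h
      have hax : a * x ≤ b * y := by
        have := mul_le_mul_of_nonneg_left this (by linarith : (0:ℝ) ≤ 2 * ν)
        calc a * x = 2 * ν * (x * (ε ^ 2 + x ^ 2) ^ ((r - 2) / 2)) := by rw [hadef]; ring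
          _ ≤ 2 * ν * (y * (ε ^ 2 + y ^ 2) ^ ((r - 2) / 2)) := this
          _ = b * y := by rw [hbdef]; ring
      nlinarith
    · have := carreau_scalar_mono ε r hε hr1 hr2 hy h
      have hax : b * y ≤ a * x := by
        have := mul_le_mul_of_nonneg_left this (by linarith : (0:ℝ) ≤ 2 * ν)
        calc b * y = 2 * ν * (y * (ε ^ 2 + y ^ 2) ^ ((r - 2) / 2)) := by rw [hbdef]; ring
          _ ≤ 2 * ν * (x * (ε ^ 2 + x ^ 2) ^ ((r - 2) / 2)) := this
          _ = a * x := by rw [hadef]; ring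
      nlinarith
  rw [expand, hX, hY]
  nlinarith [mul_le_mul_of_nonneg_left hP (by linarith : (0:ℝ) ≤ a + b)]
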